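/- Let k be a field and A a finite set of points of k^n. Then for every β in the limiting set E(D(A)) there exists a polynomial φ_β ∈ k[X_1,…,X_n] such that: (i) the leading term of φ_β in the lexicographic ordering (with X_1 < X_2 < … < X_n) is X^β; (ii) every exponent γ of a nonleading term of φ_β satisfies either (p̂(γ) lies in ∪_{a₁ ∈ p(A)} D(H(a₁)), p̂(γ) < p̂(β) lexicographically, and γ_1 < #p(A)) or (p̂(γ) = p̂(β) and γ_1 < β_1); and (iii) φ_β(a) = 0 for all a ∈ A. -/

import Mathlib

set_option linter.unusedSectionVars false
set_option maxHeartbeats 1000000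


/-- `D ∈ 𝒟ₙ`: a finite set `D ⊆ ℕ₀ⁿ` (given as a `Finset`) such that whenever `d ∈ D`
and `dᵢ ≠ 0`, then `d − eᵢ ∈ D`. -/
def IsDset {n : ℕ} (D : Finset (Fin n → ℕ)) : Prop :=
  ∀ d ∈ D, ∀ i : Fin n, d i ≠ 0 → d - Pi.single i 1 ∈ D

variable {k : Type*} [Field k] [DecidableEq k]

/-- The set `D(A) ⊆ ℕ₀ⁿ` attached to a finite set of points `A ⊆ kⁿ`, defined by
induction on `n`.  For `n = 0`, `D(A)` is empty if `A` is and the single point of `ℕ₀⁰`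
otherwise (so that for `n = 1` one gets `D(A) = {0, 1, …, #A − 1}`).  For `n + 1`:
writing `p(A)` for the set of first coordinates of `A` and
`H a₁ = p⁻¹(a₁) ∩ A ⊆ kⁿ` (via the projection `Fin.tail` forgetting the first
coordinate), `D(A) = Σ_{a₁ ∈ p(A)} D(H a₁)`, the sum with respect to the addition `+`
on `𝒟`; spelled out via the closed formula for such sums, `d ∈ D(A)` iff
`Fin.tail d ∈ ⋃_{a₁ ∈ p(A)} D(H a₁)` and `d 0 < #{a₁ ∈ p(A) : Fin.tail d ∈ D(H a₁)}`. -/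
def DofA : (n : ℕ) → Finset (Fin n → k) → Finset (Fin n → ℕ)
  | 0, A => A.image (fun _ => (fun _ => 0))
  | (n + 1), A =>
      ((A.image (fun a => a 0)).biUnion
          (fun a1 => DofA n ((A.filter (fun a => a 0 = a1)).image (fun a => Fin.tail a)))).biUnion
        (fun dh =>
          (Finset.range
              (((A.image (fun a => a 0)).filter
                  (fun a1 =>
                    dh ∈ DofA n ((A.filter (fun a => a 0 = a1)).image (fun a => Fin.tail a)))).card)).image
            (fun j => Fin.cons j dh))


/-- The strict lexicographic order on exponent vectors corresponding to the
lexicographic monomial ordering with `X₁ < X₂ < … < Xₙ`: the exponents of the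
variables with *larger* index are compared first. -/
def lexLt {n : ℕ} (α β : Fin n → ℕ) : Prop :=
  ∃ i : Fin n, α i < β i ∧ ∀ j : Fin n, i < j → α j = β j

/-- The (non-strict) lexicographic order corresponding to `X₁ < X₂ < … < Xₙ`. -/
def lexLe {n : ℕ} (α β : Fin n → ℕ) : Prop :=
  lexLt α β ∨ α = β

/-- Membership in the limiting set `E(D)`: `β ∉ D` and whenever `βᵢ ≠ 0`,
then `β − eᵢ ∈ D`. -/
def inE {n : ℕ} (D : Finset (Fin n → ℕ)) (β : Fin n → ℕ) : Prop :=
  β ∉ D ∧ ∀ i : Fin n, β i ≠ 0 → β - Pi.single i 1 ∈ D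

/-- The coefficient of the monomial `X^α` in the multivariate polynomial `f`,
with the exponent given as a function `Fin n → ℕ`. -/
noncomputable def coeffv {n : ℕ} {R : Type*} [CommSemiring R]
    (f : MvPolynomial (Fin n) R) (α : Fin n → ℕ) : R :=
  MvPolynomial.coeff (Finsupp.equivFunOnFinite.symm α) f




----------------------------------------------------------------
-- auxiliary development
----------------------------------------------------------------
open MvPolynomial

namespace Aux

/-- exponent function → finsupp -/
noncomputable def toF {n : ℕ} (α : Fin n → ℕ) : Fin n →₀ ℕ := Finsupp.equivFunOnFinite.symm α

@[simp] lemma toF_apply {n : ℕ} (α : Fin n → ℕ) (i : Fin n) : toF α i = α i := rfl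

lemma toF_inj {n : ℕ} : Function.Injective (@toF n) := Equiv.injective _

@[simp] lemma toF_coe {n : ℕ} (d : Fin n →₀ ℕ) : toF (⇑d) = d := by
  ext i; rfl

@[simp] lemma coe_toF {n : ℕ} (α : Fin n → ℕ) : ⇑(toF α) = α := rfl

lemma toF_add {n : ℕ} (α β : Fin n → ℕ) : toF (α + β) = toF α + toF β := by
  ext i; rfl

lemma coeffv_def {n : ℕ} {R : Type*} [CommSemiring R] (f : MvPolynomial (Fin n) R)
    (α : Fin n → ℕ) : coeffv f α = MvPolynomial.coeff (toF α) f := rfl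

lemma coeffv_monomial {n : ℕ} {R : Type*} [CommSemiring R] (d γ : Fin n → ℕ) (c : R) :
    coeffv (monomial (toF d) c) γ = if γ = d then c else 0 := by
  rw [coeffv_def, MvPolynomial.coeff_monomial]
  by_cases h : γ = d
  · simp [h]
  · rw [if_neg h, if_neg (fun hh => h (by simpa using (toF_inj hh).symm))]

lemma coeffv_add {n : ℕ} {R : Type*} [CommSemiring R] (f g : MvPolynomial (Fin n) R)
    (γ : Fin n → ℕ) : coeffv (f + g) γ = coeffv f γ + coeffv g γ := by
  simp [coeffv_def, MvPolynomial.coeff_add]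

lemma coeffv_sub {n : ℕ} {R : Type*} [CommRing R] (f g : MvPolynomial (Fin n) R)
    (γ : Fin n → ℕ) : coeffv (f - g) γ = coeffv f γ - coeffv g γ := by
  simp [coeffv_def, MvPolynomial.coeff_sub]

lemma coeffv_sum {n : ℕ} {R : Type*} [CommSemiring R] {ι : Type*} (s : Finset ι)
    (f : ι → MvPolynomial (Fin n) R) (γ : Fin n → ℕ) :
    coeffv (∑ i ∈ s, f i) γ = ∑ i ∈ s, coeffv (f i) γ := by
  simp [coeffv_def, MvPolynomial.coeff_sum]

lemma coeffv_C_mul {n : ℕ} {R : Type*} [CommSemiring R] (c : R)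
    (f : MvPolynomial (Fin n) R) (γ : Fin n → ℕ) :
    coeffv (C c * f) γ = c * coeffv f γ := by
  simp [coeffv_def, MvPolynomial.coeff_C_mul]

lemma coeffv_mul_ne_zero {n : ℕ} {R : Type*} [CommSemiring R]
    {f g : MvPolynomial (Fin n) R} {δ : Fin n → ℕ} (h : coeffv (f * g) δ ≠ 0) :
    ∃ δ₁ δ₂ : Fin n → ℕ, coeffv f δ₁ ≠ 0 ∧ coeffv g δ₂ ≠ 0 ∧ δ = δ₁ + δ₂ := by
  classical
  have hmem : toF δ ∈ (f * g).support := by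
    rw [MvPolynomial.mem_support_iff]; exact h
  have := MvPolynomial.support_mul f g hmem
  rw [Finset.mem_add] at this
  obtain ⟨u, hu, v, hv, huv⟩ := this
  refine ⟨⇑u, ⇑v, ?_, ?_, ?_⟩
  · rw [coeffv_def, toF_coe]; exact MvPolynomial.mem_support_iff.mp hu
  · rw [coeffv_def, toF_coe]; exact MvPolynomial.mem_support_iff.mp hv
  · have : ⇑(u + v) = ⇑(toF δ) := by rw [huv]
    simpa using this.symm

lemma eval_monomial_fun {n : ℕ} (a : Fin n → k) (d : Fin n → ℕ) (c : k) :
    MvPolynomial.eval a (monomial (toF d) c) = c * ∏ i, a i ^ d i := by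
  rw [MvPolynomial.eval_monomial]
  congr 1
  rw [Finsupp.prod_pow]
  rfl

lemma eval_eq_support_sum {n : ℕ} (a : Fin n → k) (f : MvPolynomial (Fin n) k) :
    MvPolynomial.eval a f = ∑ d ∈ f.support, MvPolynomial.coeff d f * ∏ i, a i ^ d i :=
  MvPolynomial.eval_eq' a f



lemma lexLt_trans {n : ℕ} {α β γ : Fin n → ℕ} (h1 : lexLt α β) (h2 : lexLt β γ) :
    lexLt α γ := by
  obtain ⟨i, hi, he⟩ := h1
  obtain ⟨i', hi', he'⟩ := h2
  rcases lt_trichotomy i i' with h | h | h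
  · exact ⟨i', by rw [he i' h]; exact hi', fun j hj => (he j (h.trans hj)).trans (he' j hj)⟩
  · subst h; exact ⟨i, hi.trans hi', fun j hj => (he j hj).trans (he' j hj)⟩
  · exact ⟨i, (he' i h) ▸ hi, fun j hj => (he j hj).trans (he' j (h.trans hj))⟩

lemma lexLe_lexLt_trans {n : ℕ} {α β γ : Fin n → ℕ} (h1 : lexLe α β) (h2 : lexLt β γ) :
    lexLt α γ := by
  rcases h1 with h1 | rfl
  · exact lexLt_trans h1 h2
  · exact h2

lemma lexLt_irrefl {n : ℕ} (α : Fin n → ℕ) : ¬ lexLt α α := by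
  rintro ⟨i, hi, -⟩; exact lt_irrefl _ hi

lemma lexLt_of_tail {n : ℕ} {δ γ : Fin (n + 1) → ℕ}
    (h : lexLt (Fin.tail δ) (Fin.tail γ)) : lexLt δ γ := by
  obtain ⟨i, hi, he⟩ := h
  refine ⟨i.succ, hi, fun j hj => ?_⟩
  cases j using Fin.cases with
  | zero => exact absurd hj (Fin.not_lt.mpr (Fin.zero_le _))
  | succ j' => exact he j' (Fin.succ_lt_succ_iff.mp hj)

lemma lexLt_head {n : ℕ} {δ γ : Fin (n + 1) → ℕ}
    (h0 : δ 0 < γ 0) (ht : Fin.tail δ = Fin.tail γ) : lexLt δ γ := by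
  refine ⟨0, h0, fun j hj => ?_⟩
  cases j using Fin.cases with
  | zero => exact absurd hj (lt_irrefl _)
  | succ j' => exact congrFun ht j'

lemma lexLt_cases {n : ℕ} {δ γ : Fin (n + 1) → ℕ} (h : lexLt δ γ) :
    (Fin.tail δ = Fin.tail γ ∧ δ 0 < γ 0) ∨ lexLt (Fin.tail δ) (Fin.tail γ) := by
  obtain ⟨i, hi, he⟩ := h
  cases i using Fin.cases with
  | zero =>
      left
      refine ⟨funext fun j => he j.succ (Fin.succ_pos j), hi⟩
  | succ i' =>
      right
      exact ⟨i', hi, fun j hj => he j.succ (Fin.succ_lt_succ_iff.mpr hj)⟩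

lemma lexLt_wf : ∀ n : ℕ, WellFounded (@lexLt n) := by
  intro n
  induction n with
  | zero =>
      constructor
      intro a
      constructor
      intro y hy
      obtain ⟨i, -, -⟩ := hy
      exact i.elim0
  | succ n ih =>
      have hwf : WellFounded (Prod.Lex (@lexLt n) (· < · : ℕ → ℕ → Prop)) :=
        WellFounded.prod_lex ih (Nat.lt_wfRel.wf)
      have hsub : ∀ {x y : Fin (n + 1) → ℕ}, lexLt x y →
          InvImage (Prod.Lex (@lexLt n) (· < ·))
            (fun γ => (Fin.tail γ, γ 0)) x y := by
        intro x y h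
        rcases lexLt_cases h with ⟨ht, h0⟩ | ht
        · show Prod.Lex _ _ (Fin.tail x, x 0) (Fin.tail y, y 0)
          rw [ht]
          exact Prod.Lex.right _ h0
        · exact Prod.Lex.left _ _ ht
      exact Subrelation.wf hsub (InvImage.wf _ hwf)




def pA {n : ℕ} (A : Finset (Fin (n + 1) → k)) : Finset k := A.image (fun a => a 0)

def Hfib {n : ℕ} (A : Finset (Fin (n + 1) → k)) (a1 : k) : Finset (Fin n → k) :=
  (A.filter (fun a => a 0 = a1)).image (fun a => Fin.tail a)

def pU {n : ℕ} (A : Finset (Fin (n + 1) → k)) : Finset (Fin n → ℕ) :=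
  (pA A).biUnion (fun a1 => DofA n (Hfib A a1))

def Tset {n : ℕ} (A : Finset (Fin (n + 1) → k)) (dh : Fin n → ℕ) : Finset k :=
  (pA A).filter (fun a1 => dh ∈ DofA n (Hfib A a1))

lemma mem_DofA_succ {n : ℕ} (A : Finset (Fin (n + 1) → k)) (d : Fin (n + 1) → ℕ) :
    d ∈ DofA (n + 1) A ↔
      (Fin.tail d ∈ pU A ∧ d 0 < (Tset A (Fin.tail d)).card) := by
  show d ∈ Finset.biUnion _ _ ↔ _
  rw [Finset.mem_biUnion]
  constructor
  · rintro ⟨dh, hdh, hd⟩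
    rw [Finset.mem_image] at hd
    obtain ⟨j, hj, hcons⟩ := hd
    rw [Finset.mem_range] at hj
    subst hcons
    rw [Fin.tail_cons, Fin.cons_zero]
    exact ⟨hdh, hj⟩
  · rintro ⟨h1, h2⟩
    refine ⟨Fin.tail d, h1, ?_⟩
    rw [Finset.mem_image]
    exact ⟨d 0, Finset.mem_range.mpr h2, Fin.cons_self_tail d⟩

lemma tail_add {n : ℕ} (x y : Fin (n + 1) → ℕ) :
    Fin.tail (x + y) = Fin.tail x + Fin.tail y := rfl

/-- polynomials only involving the variable `X 0` -/
def pureX0 {n : ℕ} (f : MvPolynomial (Fin (n + 1)) k) : Prop :=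
  ∀ δ : Fin (n + 1) → ℕ, coeffv f δ ≠ 0 → Fin.tail δ = 0

lemma pureX0_mul {n : ℕ} {f g : MvPolynomial (Fin (n + 1)) k}
    (hf : pureX0 f) (hg : pureX0 g) : pureX0 (f * g) := by
  intro δ h
  obtain ⟨δ1, δ2, h1, h2, rfl⟩ := coeffv_mul_ne_zero h
  rw [tail_add, hf _ h1, hg _ h2, add_zero]

lemma pureX0_C {n : ℕ} (c : k) : pureX0 (C c : MvPolynomial (Fin (n + 1)) k) := by
  intro δ h
  rw [coeffv_def, MvPolynomial.coeff_C] at h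
  have h1 : toF δ = 0 := by by_contra hne; rw [if_neg (fun hh => hne hh.symm)] at h; exact h rfl
  have hδ : δ = ⇑(0 : Fin (n + 1) →₀ ℕ) := by rw [← h1]; rfl
  rw [show δ = 0 by simpa using hδ]; rfl

lemma pureX0_one {n : ℕ} : pureX0 (1 : MvPolynomial (Fin (n + 1)) k) := by
  have h := pureX0_C (k := k) (n := n) 1
  rw [MvPolynomial.C_1] at h
  exact h

lemma pureX0_X0 {n : ℕ} : pureX0 (X 0 : MvPolynomial (Fin (n + 1)) k) := by
  intro δ h
  rw [coeffv_def, MvPolynomial.coeff_X'] at h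
  have : toF δ = Finsupp.single 0 1 := by
    by_contra hne; rw [if_neg (fun hh => hne hh.symm)] at h; exact h rfl
  have hδ : δ = ⇑(Finsupp.single (0 : Fin (n + 1)) 1) := by rw [← this]; rfl
  funext i
  show δ i.succ = 0
  rw [hδ]
  exact Finsupp.single_eq_of_ne (Fin.succ_ne_zero i)

lemma pureX0_sub {n : ℕ} {f g : MvPolynomial (Fin (n + 1)) k}
    (hf : pureX0 f) (hg : pureX0 g) : pureX0 (f - g) := by
  intro δ h
  rw [coeffv_sub] at h
  rcases (by by_contra hc; push_neg at hc; rw [hc.1, hc.2, sub_zero] at h; exact h rfl :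
      coeffv f δ ≠ 0 ∨ coeffv g δ ≠ 0) with h' | h'
  · exact hf _ h'
  · exact hg _ h'

lemma pureX0_pow {n : ℕ} {f : MvPolynomial (Fin (n + 1)) k} (hf : pureX0 f) (m : ℕ) :
    pureX0 (f ^ m) := by
  induction m with
  | zero => simpa using pureX0_one
  | succ m ih => rw [pow_succ]; exact pureX0_mul ih hf

lemma pureX0_prod {n : ℕ} {ι : Type*} (s : Finset ι) (f : ι → MvPolynomial (Fin (n + 1)) k)
    (hf : ∀ i ∈ s, pureX0 (f i)) : pureX0 (∏ i ∈ s, f i) :=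
  Finset.prod_induction f pureX0 (fun _ _ => pureX0_mul) pureX0_one hf

lemma coeffv_rename_succ {n : ℕ} (ψ : MvPolynomial (Fin n) k) (δ : Fin (n + 1) → ℕ)
    (h : coeffv (rename Fin.succ ψ) δ ≠ 0) :
    δ 0 = 0 ∧ coeffv ψ (Fin.tail δ) ≠ 0 := by
  rw [coeffv_def] at h
  obtain ⟨u, hu, hcoeff⟩ := MvPolynomial.coeff_rename_ne_zero _ _ _ h
  have h0 : δ 0 = 0 := by
    have := Finsupp.mapDomain_notin_range u (0 : Fin (n + 1))
      (by rintro ⟨i, hi⟩; exact Fin.succ_ne_zero i hi)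
    rw [hu] at this
    exact this
  have ht : Fin.tail δ = ⇑u := by
    funext i
    show δ i.succ = u i
    have := Finsupp.mapDomain_apply (Fin.succ_injective n) u i
    rw [hu] at this
    exact this
  refine ⟨h0, ?_⟩
  rw [coeffv_def, ht, toF_coe]
  exact hcoeff

lemma eval_rename_succ {n : ℕ} (a : Fin (n + 1) → k) (ψ : MvPolynomial (Fin n) k) :
    MvPolynomial.eval a (rename Fin.succ ψ) = MvPolynomial.eval (Fin.tail a) ψ := by
  rw [MvPolynomial.eval_rename]
  rfl



lemma ne_zero_of_coeffv_add {n : ℕ} {f g : MvPolynomial (Fin n) k} {δ : Fin n → ℕ}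
    (h : coeffv (f + g) δ ≠ 0) : coeffv f δ ≠ 0 ∨ coeffv g δ ≠ 0 := by
  by_contra hc
  push_neg at hc
  rw [coeffv_add, hc.1, hc.2, add_zero] at h
  exact h rfl

lemma combine {n : ℕ} (A : Finset (Fin n → k)) (γ : Fin n → ℕ) (f : MvPolynomial (Fin n) k)
    (hsupp : ∀ δ, coeffv f δ ≠ 0 → lexLt δ γ)
    (hrec : ∀ δ : Fin n → ℕ, lexLt δ γ → ∃ ψ : MvPolynomial (Fin n) k,
      (∀ ε, coeffv ψ ε ≠ 0 → ε ∈ DofA n A ∧ lexLe ε δ) ∧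
      ∀ a ∈ A, MvPolynomial.eval a ψ = ∏ i, a i ^ δ i) :
    ∃ ψ : MvPolynomial (Fin n) k,
      (∀ ε, coeffv ψ ε ≠ 0 → ε ∈ DofA n A ∧ lexLt ε γ) ∧
      ∀ a ∈ A, MvPolynomial.eval a ψ = MvPolynomial.eval a f := by
  classical
  choose Ψ hΨ1 hΨ2 using hrec
  have hmem : ∀ d ∈ f.support, lexLt (⇑d) γ := fun d hd =>
    hsupp _ (by rw [coeffv_def, toF_coe]; exact MvPolynomial.mem_support_iff.mp hd)
  refine ⟨∑ d ∈ f.support.attach,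
      C (MvPolynomial.coeff d.1 f) * Ψ (⇑d.1) (hmem d.1 d.2), ?_, ?_⟩
  · intro ε hε
    rw [coeffv_sum] at hε
    obtain ⟨d, -, hd⟩ := Finset.exists_ne_zero_of_sum_ne_zero hε
    rw [coeffv_C_mul] at hd
    have h2 : coeffv (Ψ (⇑d.1) (hmem d.1 d.2)) ε ≠ 0 := fun h => hd (by rw [h, mul_zero])
    obtain ⟨hD, hle⟩ := hΨ1 _ _ _ h2
    exact ⟨hD, lexLe_lexLt_trans hle (hmem d.1 d.2)⟩
  · intro a ha
    rw [map_sum, eval_eq_support_sum a f,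
      ← Finset.sum_attach f.support (fun d => MvPolynomial.coeff d f * ∏ i, a i ^ d i)]
    refine Finset.sum_congr rfl fun d _ => ?_
    rw [map_mul, MvPolynomial.eval_C, hΨ2 (⇑d.1) (hmem d.1 d.2) a ha]



lemma core {n : ℕ}
    (IHn : ∀ (B : Finset (Fin n → k)) (γ0 : Fin n → ℕ),
      ∃ ψ : MvPolynomial (Fin n) k,
        (∀ ε, coeffv ψ ε ≠ 0 → ε ∈ DofA n B ∧ lexLe ε γ0) ∧
        ∀ h ∈ B, MvPolynomial.eval h ψ = ∏ i, h i ^ γ0 i)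
    (A : Finset (Fin (n + 1) → k)) :
    ∀ γ : Fin (n + 1) → ℕ,
      ∃ ψ : MvPolynomial (Fin (n + 1)) k,
        (∀ ε, coeffv ψ ε ≠ 0 → ε ∈ DofA (n + 1) A ∧ lexLe ε γ) ∧
        ∀ a ∈ A, MvPolynomial.eval a ψ = ∏ i, a i ^ γ i := by
  classical
  choose Ψn hΨn1 hΨn2 using IHn
  intro γ
  induction γ using (lexLt_wf (n + 1)).induction with
  | _ γ ih =>
  set γ' := Fin.tail γ with hγ'
  set g := γ 0 with hg
  set T := Tset A γ' with hTdef
  set m := T.card with hm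
  by_cases hcase : g < m
  · -- the monomial itself is in D(A)
    have hγD : γ ∈ DofA (n + 1) A := by
      rw [mem_DofA_succ]
      refine ⟨?_, hcase⟩
      have hne : T.Nonempty := Finset.card_pos.mp (lt_of_le_of_lt (Nat.zero_le _) hcase)
      obtain ⟨a1, ha1⟩ := hne
      rw [hTdef, Tset, Finset.mem_filter] at ha1
      exact Finset.mem_biUnion.mpr ⟨a1, ha1.1, ha1.2⟩
    refine ⟨monomial (toF γ) 1, ?_, ?_⟩
    · intro ε hε
      rw [coeffv_monomial] at hε
      have hεγ : ε = γ := by by_contra hne; rw [if_neg hne] at hε; exact hε rfl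
      subst hεγ; exact ⟨hγD, Or.inr rfl⟩
    · intro a _; rw [eval_monomial_fun, one_mul]
  · push_neg at hcase  -- m ≤ g
    set PT : MvPolynomial (Fin (n + 1)) k := ∏ t ∈ T, (X 0 - C t) with hPT
    set Lag : k → MvPolynomial (Fin (n + 1)) k :=
      fun a1 => ∏ u ∈ (pA A).erase a1, (C ((a1 - u)⁻¹) * (X 0 - C u)) with hLag
    set ψr : k → MvPolynomial (Fin (n + 1)) k :=
      fun a1 => rename Fin.succ (Ψn (Hfib A a1) γ') with hψr
    set R1 : Polynomial k :=
      Polynomial.X ^ g - Polynomial.X ^ (g - m) * ∏ t ∈ T, (Polynomial.X - Polynomial.C t)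
      with hR1
    set F : MvPolynomial (Fin (n + 1)) k :=
      (X 0 ^ (g - m) * PT) * ∑ a1 ∈ pA A \ T, Lag a1 * ψr a1 with hF
    set G : MvPolynomial (Fin (n + 1)) k :=
      ∑ j ∈ Finset.range g, monomial (toF (Fin.cons j γ')) (R1.coeff j) with hG
    -- degree of R1
    have hR1deg : R1 = 0 ∨ R1.natDegree < g := by
      by_cases hR0 : R1 = 0
      · exact Or.inl hR0
      · right
        have hmonic : (Polynomial.X ^ (g - m) *
            ∏ t ∈ T, (Polynomial.X - Polynomial.C t) : Polynomial k).Monic :=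
          (Polynomial.monic_X_pow _).mul
            (Polynomial.monic_prod_of_monic _ _ fun t _ => Polynomial.monic_X_sub_C t)
        have hdegp : (Polynomial.X ^ (g - m) *
            ∏ t ∈ T, (Polynomial.X - Polynomial.C t) : Polynomial k).natDegree = g := by
          rw [Polynomial.natDegree_mul (pow_ne_zero (g - m) Polynomial.X_ne_zero)
              (Polynomial.monic_prod_of_monic _ _
                (fun t _ => Polynomial.monic_X_sub_C t)).ne_zero,
            Polynomial.natDegree_X_pow,
            Polynomial.natDegree_prod_of_monic _ _ (fun t _ => Polynomial.monic_X_sub_C t)]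
          simp only [Polynomial.natDegree_X_sub_C]
          rw [Finset.sum_const, smul_eq_mul, mul_one]
          exact Nat.sub_add_cancel hcase
        have hdlt : R1.degree < (g : WithBot ℕ) := by
          have h1 : R1 = -((Polynomial.X ^ (g - m) *
              ∏ t ∈ T, (Polynomial.X - Polynomial.C t)) - Polynomial.X ^ g) := by
            rw [hR1]; ring
          rw [h1, Polynomial.degree_neg]
          have := Polynomial.degree_sub_lt
            (p := Polynomial.X ^ (g - m) * ∏ t ∈ T, (Polynomial.X - Polynomial.C t))
            (q := Polynomial.X ^ g)
            (by rw [Polynomial.degree_X_pow, Polynomial.degree_eq_natDegree hmonic.ne_zero, hdegp])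
            hmonic.ne_zero
            (by rw [hmonic.leadingCoeff, Polynomial.leadingCoeff_X_pow])
          rw [Polynomial.degree_eq_natDegree hmonic.ne_zero, hdegp] at this
          exact this
        exact (Polynomial.natDegree_lt_iff_degree_lt hR0).mpr hdlt
    -- evaluation of F + G on A
    have hProdSplit : ∀ a : Fin (n + 1) → k,
        ∏ i, a i ^ γ i = a 0 ^ g * ∏ i, Fin.tail a i ^ γ' i := by
      intro a
      rw [Fin.prod_univ_succ]
      rfl
    have hevalFG : ∀ a ∈ A, MvPolynomial.eval a (F + G) = ∏ i, a i ^ γ i := by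
      intro a ha
      have ha0 : a 0 ∈ pA A := Finset.mem_image_of_mem _ ha
      set Pt : k := ∏ i, Fin.tail a i ^ γ' i with hPt
      have hG1 : MvPolynomial.eval a G = R1.eval (a 0) * Pt := by
        rw [hG, map_sum]
        have hterm : ∀ j ∈ Finset.range g,
            MvPolynomial.eval a (monomial (toF (Fin.cons j γ')) (R1.coeff j))
              = R1.coeff j * a 0 ^ j * Pt := by
          intro j _
          rw [eval_monomial_fun, mul_assoc]
          congr 1
          have hpr : ∏ i, a i ^ (Fin.cons j γ' : Fin (n + 1) → ℕ) i = a 0 ^ j * Pt := by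
            rw [Fin.prod_univ_succ, Fin.cons_zero, hPt]
            congr 1
          exact hpr
        rw [Finset.sum_congr rfl hterm, ← Finset.sum_mul]
        congr 1
        rcases hR1deg with h0 | hdeg
        · rw [h0]; simp
        · rw [Polynomial.eval_eq_sum_range' hdeg]
      have hR1eval : R1.eval (a 0) = a 0 ^ g - a 0 ^ (g - m) * ∏ t ∈ T, (a 0 - t) := by
        rw [hR1]
        simp [Polynomial.eval_prod]
      have hF1 : MvPolynomial.eval a F =
          (a 0 ^ (g - m) * ∏ t ∈ T, (a 0 - t)) *
          ∑ a1 ∈ pA A \ T, (MvPolynomial.eval a (Lag a1)) *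
            (MvPolynomial.eval (Fin.tail a) (Ψn (Hfib A a1) γ')) := by
        rw [hF, map_mul, map_mul, map_pow, eval_X, map_sum]
        congr 1
        · congr 1
          rw [hPT, map_prod]
          exact Finset.prod_congr rfl fun t _ => by rw [map_sub, eval_X, eval_C]
        · refine Finset.sum_congr rfl fun a1 _ => ?_
          rw [map_mul]
          congr 1
          show MvPolynomial.eval a (rename Fin.succ (Ψn (Hfib A a1) γ')) = _
          rw [eval_rename_succ]
      have hLagself : MvPolynomial.eval a (Lag (a 0)) = 1 := by
        show MvPolynomial.eval a (∏ u ∈ (pA A).erase (a 0), (C ((a 0 - u)⁻¹) * (X 0 - C u))) = 1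
        rw [map_prod]
        refine Finset.prod_eq_one fun u hu => ?_
        rw [map_mul, eval_C, map_sub, eval_X, eval_C]
        exact inv_mul_cancel₀ (sub_ne_zero.mpr (Finset.ne_of_mem_erase hu).symm)
      have hLagother : ∀ a1, a1 ≠ a 0 → MvPolynomial.eval a (Lag a1) = 0 := by
        intro a1 hne
        show MvPolynomial.eval a (∏ u ∈ (pA A).erase a1, (C ((a1 - u)⁻¹) * (X 0 - C u))) = 0
        rw [map_prod]
        refine Finset.prod_eq_zero (Finset.mem_erase.mpr ⟨hne.symm, ha0⟩) ?_
        rw [map_mul, eval_C, map_sub, eval_X, eval_C, sub_self, mul_zero]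
      have htail : Fin.tail a ∈ Hfib A (a 0) :=
        Finset.mem_image_of_mem _ (Finset.mem_filter.mpr ⟨ha, rfl⟩)
      have hfib : MvPolynomial.eval (Fin.tail a) (Ψn (Hfib A (a 0)) γ') = Pt :=
        hΨn2 _ _ _ htail
      rw [map_add, hG1, hF1, hR1eval, hProdSplit a]
      by_cases haT : a 0 ∈ T
      · have hz : ∏ t ∈ T, (a 0 - t) = 0 := Finset.prod_eq_zero haT (sub_self _)
        rw [hz]; ring
      · have hsum : ∑ a1 ∈ pA A \ T, (MvPolynomial.eval a (Lag a1)) *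
            (MvPolynomial.eval (Fin.tail a) (Ψn (Hfib A a1) γ')) = Pt := by
          rw [Finset.sum_eq_single_of_mem (a 0) (Finset.mem_sdiff.mpr ⟨ha0, haT⟩)
            (fun a1 _ hne => by rw [hLagother a1 hne, zero_mul])]
          rw [hLagself, one_mul, hfib]
        rw [hsum]; ring
    -- support of F + G
    have hsuppFG : ∀ δ, coeffv (F + G) δ ≠ 0 → lexLt δ γ := by
      intro δ hδ
      rcases ne_zero_of_coeffv_add hδ with hδ' | hδ'
      · obtain ⟨δp, δq, hp, hq, rfl⟩ := coeffv_mul_ne_zero hδ'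
        have hpure : pureX0 (X 0 ^ (g - m) * PT : MvPolynomial (Fin (n + 1)) k) := by
          refine pureX0_mul (pureX0_pow pureX0_X0 _) ?_
          rw [hPT]
          exact pureX0_prod _ _ fun t _ => pureX0_sub pureX0_X0 (pureX0_C t)
        have htp : Fin.tail δp = 0 := hpure _ hp
        rw [coeffv_sum] at hq
        obtain ⟨a1, ha1, hq1⟩ := Finset.exists_ne_zero_of_sum_ne_zero hq
        obtain ⟨δL, δr, hL, hr, rfl⟩ := coeffv_mul_ne_zero hq1
        have hpL : pureX0 (Lag a1) := by
          show pureX0 (∏ u ∈ (pA A).erase a1, (C ((a1 - u)⁻¹) * (X 0 - C u)))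
          exact pureX0_prod _ _ fun u _ =>
            pureX0_mul (pureX0_C _) (pureX0_sub pureX0_X0 (pureX0_C u))
        have htL : Fin.tail δL = 0 := hpL _ hL
        have hr' : coeffv (rename Fin.succ (Ψn (Hfib A a1) γ')) δr ≠ 0 := hr
        obtain ⟨h0r, hcr⟩ := coeffv_rename_succ _ _ hr'
        obtain ⟨hDr, hler⟩ := hΨn1 _ _ _ hcr
        rw [Finset.mem_sdiff] at ha1
        have hnotD : γ' ∉ DofA n (Hfib A a1) := by
          intro hD
          exact ha1.2 (by rw [hTdef, Tset, Finset.mem_filter]; exact ⟨ha1.1, hD⟩)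
        have hltr : lexLt (Fin.tail δr) γ' := by
          rcases hler with h | h
          · exact h
          · exact absurd (h ▸ hDr) hnotD
        apply lexLt_of_tail
        rw [tail_add, tail_add, htp, htL, zero_add, zero_add, ← hγ']
        exact hltr
      · rw [hG, coeffv_sum] at hδ'
        obtain ⟨j, hj, hδ1⟩ := Finset.exists_ne_zero_of_sum_ne_zero hδ'
        rw [coeffv_monomial] at hδ1
        have hδc : δ = Fin.cons j γ' := by
          by_contra hne; rw [if_neg hne] at hδ1; exact hδ1 rfl
        subst hδc
        have h0j : (Fin.cons j γ' : Fin (n + 1) → ℕ) 0 < γ 0 := by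
          rw [Fin.cons_zero]; exact Finset.mem_range.mp hj
        have htj : Fin.tail (Fin.cons j γ' : Fin (n + 1) → ℕ) = Fin.tail γ := by
          rw [Fin.tail_cons]
        exact lexLt_head h0j htj
    obtain ⟨ψ, hψ1, hψ2⟩ := combine A γ (F + G) hsuppFG (fun δ hδ => ih δ hδ)
    exact ⟨ψ, fun ε hε => ⟨(hψ1 ε hε).1, Or.inl (hψ1 ε hε).2⟩,
      fun a ha => by rw [hψ2 a ha, hevalFG a ha]⟩



lemma spanB : ∀ (n : ℕ) (A : Finset (Fin n → k)) (γ : Fin n → ℕ),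
    ∃ ψ : MvPolynomial (Fin n) k,
      (∀ ε, coeffv ψ ε ≠ 0 → ε ∈ DofA n A ∧ lexLe ε γ) ∧
      ∀ a ∈ A, MvPolynomial.eval a ψ = ∏ i, a i ^ γ i := by
  intro n
  induction n with
  | zero =>
      intro A γ
      rcases A.eq_empty_or_nonempty with rfl | ⟨a0, ha0⟩
      · refine ⟨0, ?_, ?_⟩
        · intro ε hε
          exact absurd (by simp [coeffv_def] : coeffv (0 : MvPolynomial (Fin 0) k) ε = 0) hε
        · intro a ha
          exact absurd ha (Finset.notMem_empty a)
      · have hγ0 : γ = fun _ => (0 : ℕ) := funext fun i => i.elim0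
        refine ⟨monomial (toF γ) 1, ?_, ?_⟩
        · intro ε hε
          rw [coeffv_monomial] at hε
          have hεγ : ε = γ := by by_contra hne; rw [if_neg hne] at hε; exact hε rfl
          subst hεγ
          refine ⟨?_, Or.inr rfl⟩
          show ε ∈ A.image (fun _ => (fun _ => 0))
          rw [hγ0]
          exact Finset.mem_image_of_mem _ ha0
        · intro a _
          rw [eval_monomial_fun, one_mul]
  | succ n ihn => exact fun A => core ihn A

end Aux

open Aux in
theorem stmt_17' (n : ℕ) (A : Finset (Fin (n + 2) → k)) (β : Fin (n + 2) → ℕ)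
    (hβ : inE (DofA (n + 2) A) β) :
    ∃ φ : MvPolynomial (Fin (n + 2)) k,
      (coeffv φ β = 1 ∧ ∀ γ : Fin (n + 2) → ℕ, coeffv φ γ ≠ 0 → γ ≠ β → lexLt γ β) ∧
      (∀ γ : Fin (n + 2) → ℕ, coeffv φ γ ≠ 0 → γ ≠ β →
        ((Fin.tail γ ∈ (A.image (fun a => a 0)).biUnion
              (fun a1 => DofA (n + 1)
                ((A.filter (fun a => a 0 = a1)).image (fun a => Fin.tail a))) ∧
            lexLt (Fin.tail γ) (Fin.tail β) ∧
            γ 0 < (A.image (fun a => a 0)).card) ∨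
          (Fin.tail γ = Fin.tail β ∧ γ 0 < β 0))) ∧
      (∀ a ∈ A, MvPolynomial.eval a φ = 0) := by
  classical
  obtain ⟨hβD, -⟩ := hβ
  obtain ⟨ψ, hψ1, hψ2⟩ := Aux.spanB (n + 2) A β
  have hψβ : coeffv ψ β = 0 := by
    by_contra h
    exact hβD ((hψ1 β h).1)
  have hkey : ∀ γ : Fin (n + 2) → ℕ,
      coeffv (MvPolynomial.monomial (toF β) 1 - ψ) γ ≠ 0 → γ ≠ β →
      γ ∈ DofA (n + 2) A ∧ lexLt γ β := by
    intro γ hγ hne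
    rw [coeffv_sub, coeffv_monomial, if_neg hne, zero_sub, neg_ne_zero] at hγ
    obtain ⟨hD, hle⟩ := hψ1 γ hγ
    rcases hle with hlt | heq
    · exact ⟨hD, hlt⟩
    · exact absurd heq hne
  refine ⟨MvPolynomial.monomial (toF β) 1 - ψ, ⟨?_, ?_⟩, ?_, ?_⟩
  · rw [coeffv_sub, coeffv_monomial, if_pos rfl, hψβ, sub_zero]
  · exact fun γ hγ hne => (hkey γ hγ hne).2
  · intro γ hγ hne
    obtain ⟨hD, hlt⟩ := hkey γ hγ hne
    have hmem : γ ∈ DofA (n + 1 + 1) A := hD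
    rw [mem_DofA_succ] at hmem
    obtain ⟨hU, hcnt⟩ := hmem
    rcases lexLt_cases hlt with ⟨hteq, hhead⟩ | htlt
    · exact Or.inr ⟨hteq, hhead⟩
    · refine Or.inl ⟨hU, htlt, lt_of_lt_of_le hcnt ?_⟩
      exact Finset.card_filter_le _ _
  · intro a ha
    rw [map_sub, eval_monomial_fun, one_mul, hψ2 a ha, sub_self]


/-- Section 5 of the paper (the polynomials `φ_β`), for `n ≥ 2` (here `n + 2`
variables): for every `β ∈ E(D(A))` there is a polynomial `φ_β ∈ k[X₁,…,X_{n+2}]` such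
that (i) its lexicographic leading term is `X^β`; (ii) every exponent `γ` of a
nonleading term satisfies either (`p̂(γ)` lies in `⋃_{a₁ ∈ p(A)} D(H(a₁))`,
`p̂(γ) < p̂(β)` lexicographically, and `γ₁ < #p(A)`) or (`p̂(γ) = p̂(β)` and
`γ₁ < β₁`); and (iii) `φ_β(a) = 0` for all `a ∈ A`.  Here `p` is the first-coordinate
projection, `p̂ = Fin.tail` forgets the first coordinate, and
`H(a₁) = p⁻¹(a₁) ∩ A ⊆ k^{n+1}`. -/
theorem stmt_17 (n : ℕ) (A : Finset (Fin (n + 2) → k)) (β : Fin (n + 2) → ℕ)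
    (hβ : inE (DofA (n + 2) A) β) :
    ∃ φ : MvPolynomial (Fin (n + 2)) k,
      (coeffv φ β = 1 ∧ ∀ γ : Fin (n + 2) → ℕ, coeffv φ γ ≠ 0 → γ ≠ β → lexLt γ β) ∧
      (∀ γ : Fin (n + 2) → ℕ, coeffv φ γ ≠ 0 → γ ≠ β →
        ((Fin.tail γ ∈ (A.image (fun a => a 0)).biUnion
              (fun a1 => DofA (n + 1)
                ((A.filter (fun a => a 0 = a1)).image (fun a => Fin.tail a))) ∧
            lexLt (Fin.tail γ) (Fin.tail β) ∧
            γ 0 < (A.image (fun a => a 0)).card) ∨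
          (Fin.tail γ = Fin.tail β ∧ γ 0 < β 0))) ∧
      (∀ a ∈ A, MvPolynomial.eval a φ = 0) := by
  exact stmt_17' n A β hβ
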